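/- Let E be a directed graph, let H_0 := {u ∈ E^0 : there exist e ≠ f ∈ E^1 with s(e) = s(f) = u and paths from r(e) to u and from r(f) to u}, and let H be any subset of E^0 containing H_0. Then no vertex v ∈ E^0 \ H is the base of two distinct simple closed paths all of whose vertices lie in E^0 \ H. In particular, the quotient graph on the vertices outside the hereditary saturated closure of H_0 has isolated closed paths. -/

import Mathlib

/-- A directed graph `E = (E⁰, E¹, r, s)`: `V` is the vertex set `E⁰`, `Edg` is the
edge set `E¹`, and `s`, `r` give the source and range of each edge. -/
structure DGraph (V : Type*) (Edg : Type*) where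
  s : Edg → V
  r : Edg → V

namespace DGraph

variable {V Edg : Type*}

/-- There is an edge from `v` to `w`. -/
def Adj (G : DGraph V Edg) (v w : V) : Prop := ∃ e, G.s e = v ∧ G.r e = w

/-- There is a path (possibly of length zero, i.e. a vertex) from `v` to `w`. -/
def Reaches (G : DGraph V Edg) : V → V → Prop := Relation.ReflTransGen G.Adj

/-- A subset `X ⊆ E⁰` is hereditary if `r(e) ∈ X` whenever `s(e) ∈ X`. -/
def Hereditary (G : DGraph V Edg) (X : Set V) : Prop := ∀ e, G.s e ∈ X → G.r e ∈ X

/-- A vertex is a finite emitter if `s⁻¹(v)` is finite and nonempty. -/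
def FiniteEmitter (G : DGraph V Edg) (v : V) : Prop :=
  {e | G.s e = v}.Finite ∧ {e | G.s e = v}.Nonempty

/-- A subset `X ⊆ E⁰` is saturated if every finite emitter `v` with
`r(s⁻¹(v)) ⊆ X` lies in `X`. -/
def Saturated (G : DGraph V Edg) (X : Set V) : Prop :=
  ∀ v, FiniteEmitter G v → (∀ e, G.s e = v → G.r e ∈ X) → v ∈ X

/-- The hereditary saturated closure of `X`: the smallest hereditary and saturated
subset of `E⁰` containing `X`. -/
def satClosure (G : DGraph V Edg) (X : Set V) : Set V :=
  ⋂₀ {Y | Hereditary G Y ∧ Saturated G Y ∧ X ⊆ Y}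

/-- The consecutive edges of a path match up: `r(eᵢ) = s(eᵢ₊₁)`. -/
def IsChain (G : DGraph V Edg) (p : List Edg) : Prop :=
  List.Chain' (fun e f => G.r e = G.s f) p

/-- `p` is a closed path (of length ≥ 1) based at `v`. -/
def IsClosedPathAt (G : DGraph V Edg) (p : List Edg) (v : V) : Prop :=
  ∃ hne : p ≠ [], IsChain G p ∧ G.s (p.head hne) = v ∧ G.r (p.getLast hne) = v

/-- `p` is a closed path (of length ≥ 1). -/
def IsClosedPath (G : DGraph V Edg) (p : List Edg) : Prop := ∃ v, IsClosedPathAt G p v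

/-- The vertex set `α⁰ = {s(e₁), …, s(eₙ)}` of a path. -/
def pathVerts (G : DGraph V Edg) (p : List Edg) : Set V := {w | ∃ e ∈ p, G.s e = w}

/-- An exit of a closed path `e₁⋯eₙ` is an edge `f` with `s(f) = s(eᵢ)` and
`f ≠ eᵢ` for some `i`. -/
def IsExitOf (G : DGraph V Edg) (f : Edg) (p : List Edg) : Prop :=
  ∃ e ∈ p, G.s f = G.s e ∧ f ≠ e

/-- `p` is a simple closed path based at `v`: a closed path whose sources are
pairwise distinct. -/
def IsSimpleClosedPathAt (G : DGraph V Edg) (p : List Edg) (v : V) : Prop :=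
  IsClosedPathAt G p v ∧ (p.map G.s).Nodup

end DGraph

section Helpers

variable {V Edg : Type*}

lemma chain_rel {G : DGraph V Edg} {p : List Edg} (hc : G.IsChain p)
    {i : ℕ} (h : i + 1 < p.length) :
    G.r (p[i]'(by omega)) = G.s p[i+1] := by
  simpa using List.isChain_iff_getElem.mp hc i (by omega)

lemma reach_between {G : DGraph V Edg} {p : List Edg} (hc : G.IsChain p)
    {i j : ℕ} (hij : i ≤ j) (hj : j < p.length) :
    G.Reaches (G.s (p[i]'(by omega))) (G.s p[j]) := by
  induction j, hij using Nat.le_induction with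
  | base => exact Relation.ReflTransGen.refl
  | succ j hij ih =>
    exact (ih (by omega)).tail ⟨p[j]'(by omega), rfl, chain_rel hc hj⟩

lemma reach_to_last {G : DGraph V Edg} {p : List Edg} (hc : G.IsChain p)
    {i : ℕ} (hi : i < p.length) (hne : p ≠ []) :
    G.Reaches (G.r p[i]) (G.r (p.getLast hne)) := by
  rcases eq_or_lt_of_le (Nat.succ_le_of_lt hi) with h | h
  · rw [List.getLast_eq_getElem]
    have hlen : p.length - 1 = i := by omega
    rw [getElem_congr_idx hlen]
    exact Relation.ReflTransGen.refl
  · rw [chain_rel hc h]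
    have h1 : i + 1 ≤ p.length - 1 := by omega
    have h2 : p.length - 1 < p.length := by omega
    refine (reach_between hc h1 h2).tail ⟨p[p.length - 1]'h2, rfl, ?_⟩
    rw [List.getLast_eq_getElem]

/-- If `p` is a simple closed path at `v` and `q` is a shorter closed path at `v`
agreeing with `p` on all of its indices, we get a contradiction. -/
lemma prefix_absurd {G : DGraph V Edg} {p q : List Edg} {v : V}
    (hp : G.IsSimpleClosedPathAt p v) (hq : G.IsClosedPathAt q v)
    (hlen : q.length < p.length)
    (heq : ∀ i, (h1 : i < p.length) → (h2 : i < q.length) → p[i] = q[i]) :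
    False := by
  obtain ⟨⟨hpne, hpc, hph, hpl⟩, hpnd⟩ := hp
  obtain ⟨hqne, hqc, hqh, hql⟩ := hq
  have hq0 : 0 < q.length := List.length_pos_iff.mpr hqne
  have hp0 : 0 < p.length := by omega
  have h1 : G.s (p[0]'hp0) = v := by
    rw [← List.head_eq_getElem_zero hpne]; exact hph
  have h2 : G.s (p[q.length]'hlen) = v := by
    have hcr := chain_rel hpc (i := q.length - 1) (by omega)
    have hmm : q.length - 1 + 1 = q.length := by omega
    rw [getElem_congr_idx hmm] at hcr
    rw [← hcr, heq (q.length - 1) (by omega) (by omega)]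
    rw [List.getLast_eq_getElem] at hql
    exact hql
  have e0 : (p.map G.s)[0]'(by simpa using hp0) = v := by simpa using h1
  have em : (p.map G.s)[q.length]'(by simpa using hlen) = v := by simpa using h2
  have : (0 : ℕ) = q.length := hpnd.getElem_inj_iff.mp (by rw [e0, em])
  omega

end Helpers

/-- if `H` contains the set
`H₀ = {u : ∃ e ≠ f with s(e) = s(f) = u and paths from r(e), r(f) back to u}`,
then no vertex outside `H` is the base of two distinct simple closed paths all
of whose vertices lie outside `H`. -/
theorem stmt15 {V Edg : Type*} (G : DGraph V Edg) (H : Set V)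
    (hH : {u | ∃ e f : Edg, e ≠ f ∧ G.s e = u ∧ G.s f = u ∧
      G.Reaches (G.r e) u ∧ G.Reaches (G.r f) u} ⊆ H)
    (v : V) (hv : v ∉ H) (p q : List Edg)
    (hp : G.IsSimpleClosedPathAt p v) (hq : G.IsSimpleClosedPathAt q v)
    (hpH : G.pathVerts p ⊆ Hᶜ) (hqH : G.pathVerts q ⊆ Hᶜ) :
    p = q := by
  by_contra hne
  classical
  have hex : ∃ n : ℕ, p[n]? ≠ q[n]? := by
    by_contra hcon
    push_neg at hcon
    exact hne (List.ext_getElem? fun n => by simpa using hcon n)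
  set n := Nat.find hex with hn
  have hspec : p[n]? ≠ q[n]? := Nat.find_spec hex
  have hmin : ∀ i < n, p[i]? = q[i]? := fun i hi =>
    not_not.mp (Nat.find_min hex hi)
  have heq : ∀ i, (h1 : i < p.length) → (h2 : i < q.length) → i < n → p[i] = q[i] := by
    intro i h1 h2 hi
    have := hmin i hi
    rw [List.getElem?_eq_getElem h1, List.getElem?_eq_getElem h2] at this
    exact Option.some.inj this
  by_cases h1 : n < p.length <;> by_cases h2 : n < q.length
  · -- main case: p and q both have an n-th edge, and these differ
    obtain ⟨⟨hpne, hpc, hph, hpl⟩, hpnd⟩ := hp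
    obtain ⟨⟨hqne, hqc, hqh, hql⟩, hqnd⟩ := hq
    have hef : p[n] ≠ q[n] := by
      intro h
      rw [List.getElem?_eq_getElem h1, List.getElem?_eq_getElem h2, h] at hspec
      exact hspec rfl
    set u := G.s p[n] with hu
    have hsu : G.s q[n] = u := by
      rcases Nat.eq_zero_or_pos n with h0 | h0
      · rw [hu, getElem_congr_idx (c := p) h0, getElem_congr_idx (c := q) h0,
          ← List.head_eq_getElem_zero hpne, ← List.head_eq_getElem_zero hqne,
          hph, hqh]
      · have hcp := chain_rel hpc (i := n - 1) (by omega)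
        have hcq := chain_rel hqc (i := n - 1) (by omega)
        have hmm : n - 1 + 1 = n := by omega
        rw [getElem_congr_idx (c := p) hmm] at hcp
        rw [getElem_congr_idx (c := q) hmm] at hcq
        rw [hu, ← hcp, ← hcq, heq (n - 1) (by omega) (by omega) (by omega)]
    have huH : u ∉ H := hpH ⟨p[n], List.getElem_mem h1, rfl⟩
    have hs0p : G.s (p[0]'(by omega)) = v := by
      rw [← List.head_eq_getElem_zero hpne]; exact hph
    have hvu : G.Reaches v u := by
      rw [← hs0p]; exact reach_between hpc (Nat.zero_le n) h1
    have hr1 : G.Reaches (G.r p[n]) u := by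
      refine Relation.ReflTransGen.trans ?_ hvu
      rw [← hpl]; exact reach_to_last hpc h1 hpne
    have hr2 : G.Reaches (G.r q[n]) u := by
      refine Relation.ReflTransGen.trans ?_ hvu
      rw [← hql]; exact reach_to_last hqc h2 hqne
    exact huH (hH ⟨p[n], q[n], hef, rfl, hsu, hr1, hr2⟩)
  · exact prefix_absurd hp hq.1 (by omega)
      (fun i hi1 hi2 => heq i hi1 hi2 (by omega))
  · exact prefix_absurd hq hp.1 (by omega)
      (fun i hi1 hi2 => (heq i hi2 hi1 (by omega)).symm)
  · rw [List.getElem?_eq_none (by omega), List.getElem?_eq_none (by omega)] at hspec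
    exact hspec rfl
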